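/- In the polynomial ring ℤ[y], if C(z) is the formal power series compositional inverse of z/((1+z)(1+y²z)), then for all n ≥ k ≥ 0, the coefficient of z^{n+1} in C(z)^{k+1} equals Σ_{j=0}^{n-k} y^{2j} (C(n,j)C(n,j+k) - C(n,j-1)C(n,j+k+1)). -/

import Mathlib

/-- Binomial coefficient `C(a, b)` with an integer lower index, with the convention
`C(a, b) = 0` for `b < 0`. -/
def chooseZ (a : ℕ) (b : ℤ) : ℤ := if 0 ≤ b then (a.choose b.toNat : ℤ) else 0

noncomputable def Apoly (n k : ℕ) : Polynomial ℤ :=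
  ∑ j ∈ Finset.range (n+1),
    Polynomial.X ^ (2*j) * Polynomial.C ((n.choose j : ℤ) * (n.choose (j+k)))

open Polynomial Finset

lemma shift_sum (n m : ℕ) :
    ∑ i ∈ range (n+1), (X:ℤ[X]) ^ (2*(i+1)) * C ((n.choose (i+1) : ℤ) * (n.choose (i+1+m)))
      = Apoly n m - C ((n.choose m : ℤ)) := by
  have h1 := Finset.sum_range_succ' (fun j => (X:ℤ[X]) ^ (2*j) * C ((n.choose j : ℤ) * (n.choose (j+m)))) (n+1)
  have h2 := Finset.sum_range_succ (fun j => (X:ℤ[X]) ^ (2*j) * C ((n.choose j : ℤ) * (n.choose (j+m)))) (n+1)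
  have htop : (n.choose (n+1) : ℤ) = 0 := by
    simp [Nat.choose_eq_zero_of_lt]
  rw [htop] at h2
  simp only [zero_mul, map_zero, mul_zero, add_zero] at h2
  have : Apoly n m = ∑ i ∈ range (n+1),
      (X:ℤ[X]) ^ (2*(i+1)) * C ((n.choose (i+1) : ℤ) * (n.choose (i+1+m)))
      + (X:ℤ[X]) ^ (2*0) * C ((n.choose 0 : ℤ) * (n.choose (0+m))) := by
    rw [Apoly, ← h2, h1]
  rw [this]
  simp

lemma Ppoly (n m : ℕ) :
    ∑ j ∈ range (n+2), (X:ℤ[X]) ^ (2*j) * C (((n+1).choose j : ℤ) * (n.choose (j+m)))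
      = Apoly n m + X^2 * Apoly n (m+1) := by
  rw [Finset.sum_range_succ' (fun j => (X:ℤ[X]) ^ (2*j) * C (((n+1).choose j : ℤ) * (n.choose (j+m)))) (n+1)]
  have hsplit : ∀ i ∈ range (n+1),
      (X:ℤ[X]) ^ (2*(i+1)) * C (((n+1).choose (i+1) : ℤ) * (n.choose (i+1+m)))
      = X^2 * ((X:ℤ[X]) ^ (2*i) * C ((n.choose i : ℤ) * (n.choose (i+(m+1)))))
        + (X:ℤ[X]) ^ (2*(i+1)) * C ((n.choose (i+1) : ℤ) * (n.choose (i+1+m))) := by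
    intro i _
    have h : ((n+1).choose (i+1) : ℤ) = n.choose i + n.choose (i+1) := by
      rw [Nat.choose_succ_succ]; push_cast; ring
    have he : i+1+m = i+(m+1) := by ring
    have hx : (X:ℤ[X])^(2*(i+1)) = X^2 * X^(2*i) := by ring
    rw [h, he, hx]
    simp only [add_mul, map_add, map_mul]
    ring
  rw [Finset.sum_congr rfl hsplit, Finset.sum_add_distrib, ← Finset.mul_sum, shift_sum n m]
  have : ∑ i ∈ range (n+1), (X:ℤ[X]) ^ (2*i) * C ((n.choose i : ℤ) * (n.choose (i+(m+1)))) = Apoly n (m+1) := rfl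
  rw [this]
  simp only [Nat.mul_zero, pow_zero, Nat.choose_zero_right, Nat.cast_one, one_mul, Nat.zero_add]
  ring

-- Pascal recurrence, k+1 case
lemma Apoly_succ_succ (n k : ℕ) :
    Apoly (n+1) (k+1) = Apoly n k + (1 + X^2) * Apoly n (k+1) + X^2 * Apoly n (k+2) := by
  have hsplit : ∀ j ∈ range (n+2),
      (X:ℤ[X]) ^ (2*j) * C (((n+1).choose j : ℤ) * ((n+1).choose (j+(k+1))))
      = (X:ℤ[X]) ^ (2*j) * C (((n+1).choose j : ℤ) * (n.choose (j+k)))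
        + (X:ℤ[X]) ^ (2*j) * C (((n+1).choose j : ℤ) * (n.choose (j+(k+1)))) := by
    intro j _
    have h : ((n+1).choose (j+(k+1)) : ℤ) = n.choose (j+k) + n.choose (j+(k+1)) := by
      have : j+(k+1) = (j+k)+1 := by ring
      rw [this, Nat.choose_succ_succ]; push_cast; ring
    rw [h]
    simp only [mul_add, map_add]
  rw [Apoly, Finset.sum_congr rfl hsplit, Finset.sum_add_distrib, Ppoly n k, Ppoly n (k+1)]
  ring

-- Pascal recurrence, k = 0 case
lemma Apoly_succ_zero (n : ℕ) :
    Apoly (n+1) 0 = (1 + X^2) * Apoly n 0 + 2 * X^2 * Apoly n 1 := by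
  rw [Apoly, Finset.sum_range_succ' (fun j => (X:ℤ[X]) ^ (2*j) * C (((n+1).choose j : ℤ) * ((n+1).choose (j+0)))) (n+1)]
  have hsplit : ∀ i ∈ range (n+1),
      (X:ℤ[X]) ^ (2*(i+1)) * C (((n+1).choose (i+1) : ℤ) * ((n+1).choose (i+1+0)))
      = X^2 * ((X:ℤ[X]) ^ (2*i) * C ((n.choose i : ℤ) * (n.choose (i+0))))
        + 2 * X^2 * ((X:ℤ[X]) ^ (2*i) * C ((n.choose i : ℤ) * (n.choose (i+1))))
        + (X:ℤ[X]) ^ (2*(i+1)) * C ((n.choose (i+1) : ℤ) * (n.choose (i+1+0))) := by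
    intro i _
    have h : ((n+1).choose (i+1) : ℤ) = n.choose i + n.choose (i+1) := by
      rw [Nat.choose_succ_succ]; push_cast; ring
    have hx : (X:ℤ[X])^(2*(i+1)) = X^2 * X^(2*i) := by ring
    rw [h, hx]
    simp only [Nat.add_zero, add_mul, mul_add, map_add, map_mul]
    ring
  rw [Finset.sum_congr rfl hsplit]
  simp only [Finset.sum_add_distrib, ← Finset.mul_sum]
  have e1 : ∑ i ∈ range (n+1), (X:ℤ[X]) ^ (2*i) * C ((n.choose i : ℤ) * (n.choose (i+0))) = Apoly n 0 := rfl
  have e2 : ∑ i ∈ range (n+1), (X:ℤ[X]) ^ (2*i) * C ((n.choose i : ℤ) * (n.choose (i+1))) = Apoly n 1 := rfl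
  have e3 : ∑ i ∈ range (n+1), (X:ℤ[X]) ^ (2*(i+1)) * C ((n.choose (i+1) : ℤ) * (n.choose (i+1+0)))
      = Apoly n 0 - C ((n.choose 0 : ℤ)) := shift_sum n 0
  rw [e1, e2, e3]
  simp
  ring


lemma rhs_eq (n k : ℕ) (hk : k ≤ n) :
    ∑ j ∈ Finset.range (n - k + 1),
          (X:ℤ[X]) ^ (2 * j) *
            C ((n.choose j : ℤ) * (n.choose (j + k))
              - chooseZ n ((j : ℤ) - 1) * (n.choose (j + k + 1)))
      = Apoly n k - X^2 * Apoly n (k+2) := by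
  have hsub : Finset.range (n - k + 1) ⊆ Finset.range (n + 1) := by
    apply Finset.range_subset_range.mpr; omega
  have hzero : ∀ j ∈ Finset.range (n+1), j ∉ Finset.range (n - k + 1) →
      (X:ℤ[X]) ^ (2 * j) * C ((n.choose j : ℤ) * (n.choose (j + k))
        - chooseZ n ((j : ℤ) - 1) * (n.choose (j + k + 1))) = 0 := by
    intro j hj hj2
    have hjk : n < j + k := by
      simp only [Finset.mem_range] at hj hj2; omega
    have c1 : (n.choose (j+k) : ℤ) = 0 := by simp [Nat.choose_eq_zero_of_lt hjk]
    have c2 : (n.choose (j+k+1) : ℤ) = 0 := by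
      have h : n < j+k+1 := by omega
      simp [Nat.choose_eq_zero_of_lt h]
    rw [c1, c2]
    simp
  rw [Finset.sum_subset hsub hzero]
  have hsplit : ∀ j ∈ range (n+1),
      (X:ℤ[X]) ^ (2 * j) * C ((n.choose j : ℤ) * (n.choose (j + k))
          - chooseZ n ((j : ℤ) - 1) * (n.choose (j + k + 1)))
      = (X:ℤ[X]) ^ (2 * j) * C ((n.choose j : ℤ) * (n.choose (j + k)))
        - (X:ℤ[X]) ^ (2 * j) * C (chooseZ n ((j : ℤ) - 1) * (n.choose (j + k + 1))) := by
    intro j _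
    rw [map_sub, mul_sub]
  rw [Finset.sum_congr rfl hsplit, Finset.sum_sub_distrib]
  have e1 : ∑ j ∈ range (n+1), (X:ℤ[X]) ^ (2*j) * C ((n.choose j : ℤ) * (n.choose (j+k))) = Apoly n k := rfl
  rw [e1]
  congr 1
  rw [Finset.sum_range_succ' (fun j => (X:ℤ[X]) ^ (2*j) * C (chooseZ n ((j:ℤ)-1) * (n.choose (j+k+1)))) n]
  have hf0 : (X:ℤ[X]) ^ (2*0) * C (chooseZ n (((0:ℕ):ℤ)-1) * (n.choose (0+k+1))) = 0 := by
    have : chooseZ n (((0:ℕ):ℤ)-1) = 0 := by simp [chooseZ]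
    rw [this]; simp
  rw [hf0, add_zero]
  have hsplit2 : ∀ i ∈ range n,
      (X:ℤ[X]) ^ (2*(i+1)) * C (chooseZ n (((i+1:ℕ):ℤ)-1) * (n.choose (i+1+k+1)))
      = X^2 * ((X:ℤ[X]) ^ (2*i) * C ((n.choose i : ℤ) * (n.choose (i+(k+2))))) := by
    intro i _
    have h1 : chooseZ n (((i+1:ℕ):ℤ)-1) = (n.choose i : ℤ) := by
      simp [chooseZ]
    have h2 : i+1+k+1 = i+(k+2) := by ring
    have hx : (X:ℤ[X])^(2*(i+1)) = X^2 * X^(2*i) := by ring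
    rw [h1, h2, hx]; ring
  rw [Finset.sum_congr rfl hsplit2, ← Finset.mul_sum]
  congr 1
  have h3 := Finset.sum_range_succ (fun i => (X:ℤ[X]) ^ (2*i) * C ((n.choose i : ℤ) * (n.choose (i+(k+2))))) n
  have htop : (n.choose (n+(k+2)) : ℤ) = 0 := by
    simp [Nat.choose_eq_zero_of_lt]
  rw [htop, mul_zero, map_zero, mul_zero, add_zero] at h3
  exact h3.symm

lemma Apoly_zero_left (k : ℕ) : Apoly 0 k = C ((Nat.choose 0 k : ℤ)) := by
  simp [Apoly]

lemma main_coeff (G : PowerSeries (Polynomial ℤ))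
    (h0 : PowerSeries.constantCoeff (R := Polynomial ℤ) G = 0)
    (hG : G = PowerSeries.X * (1 + G) *
      (1 + PowerSeries.C (R := Polynomial ℤ) (Polynomial.X ^ 2) * G)) :
    ∀ n k : ℕ, PowerSeries.coeff (R := Polynomial ℤ) (n+1) (G^(k+1))
      = Apoly n k - X^2 * Apoly n (k+2) := by
  have hvan : ∀ m j : ℕ, m < j → PowerSeries.coeff (R := Polynomial ℤ) m (G^j) = 0 := by
    intro m j hmj
    have hX : (PowerSeries.X : PowerSeries (Polynomial ℤ)) ∣ G := PowerSeries.X_dvd_iff.mpr h0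
    have : (PowerSeries.X : PowerSeries (Polynomial ℤ))^j ∣ G^j := pow_dvd_pow_of_dvd hX j
    exact PowerSeries.X_pow_dvd_iff.mp this m hmj
  have hexp : ∀ k : ℕ, G^(k+1) = PowerSeries.X *
      (G^k + G^(k+1) + PowerSeries.C (R := Polynomial ℤ) (X^2) * G^(k+1)
        + PowerSeries.C (R := Polynomial ℤ) (X^2) * G^(k+2)) := by
    intro k
    have h1 : G ^ (k+1) = G^k * G := pow_succ G k
    rw [h1]
    nth_rewrite 2 [hG]
    ring
  have hrec : ∀ m k : ℕ, PowerSeries.coeff (R := Polynomial ℤ) (m+1) (G^(k+1))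
      = PowerSeries.coeff (R := Polynomial ℤ) m (G^k)
        + PowerSeries.coeff (R := Polynomial ℤ) m (G^(k+1))
        + X^2 * PowerSeries.coeff (R := Polynomial ℤ) m (G^(k+1))
        + X^2 * PowerSeries.coeff (R := Polynomial ℤ) m (G^(k+2)) := by
    intro m k
    nth_rewrite 1 [hexp k]
    rw [PowerSeries.coeff_succ_X_mul]
    simp only [map_add, PowerSeries.coeff_C_mul]
  intro n
  induction n with
  | zero =>
    intro k
    match k with
    | 0 =>
      rw [hrec 0 0]
      have c0 : PowerSeries.coeff (R := Polynomial ℤ) 0 (G^0) = 1 := by simp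
      have c1 : PowerSeries.coeff (R := Polynomial ℤ) 0 (G^1) = 0 := by
        simpa [PowerSeries.coeff_zero_eq_constantCoeff] using h0
      have c2 : PowerSeries.coeff (R := Polynomial ℤ) 0 (G^2) = 0 := by
        rw [PowerSeries.coeff_zero_eq_constantCoeff, map_pow, h0]
        simp
      rw [c0, c1, c2, Apoly_zero_left, Apoly_zero_left]
      simp
    | (s+1) =>
      rw [hvan 1 (s+2) (by omega), Apoly_zero_left, Apoly_zero_left]
      simp
  | succ n ih =>
    intro k
    match k with
    | 0 =>
      rw [hrec (n+1) 0]
      have c0 : PowerSeries.coeff (R := Polynomial ℤ) (n+1) (G^0) = 0 := by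
        simp [PowerSeries.coeff_one]
      rw [c0, ih 0, ih 1, Apoly_succ_zero, show (0+2:ℕ) = 1+1 by omega, Apoly_succ_succ n 1]
      simp only [show (1+2:ℕ) = 3 by omega, show (1+1:ℕ) = 2 by omega]
      ring
    | (s+1) =>
      rw [hrec (n+1) (s+1), ih s, ih (s+1), ih (s+2),
        Apoly_succ_succ n s]
      simp only [show s+1+2 = (s+2)+1 by omega]
      rw [Apoly_succ_succ n (s+2)]
      simp only [show s+2+1 = s+3 by omega, show s+2+2 = s+4 by omega,
        show s+3+1 = s+4 by omega]
      ring

/-- If `G(z)` is the formal power series compositional inverse of `z/((1+z)(1+y²z))` over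
`ℤ[y]` — equivalently, `G(0) = 0` and `G = z(1+G)(1+y²G)` — then for `n ≥ k ≥ 0` the
coefficient of `z^{n+1}` in `G^{k+1}` equals
`Σ_{j=0}^{n-k} y^{2j} (C(n,j)C(n,j+k) - C(n,j-1)C(n,j+k+1))`. -/
theorem coeff_comp_inverse_pow (G : PowerSeries (Polynomial ℤ))
    (h0 : PowerSeries.constantCoeff (R := Polynomial ℤ) G = 0)
    (hG : G = PowerSeries.X * (1 + G) *
      (1 + PowerSeries.C (R := Polynomial ℤ) (Polynomial.X ^ 2) * G))
    (n k : ℕ) (hk : k ≤ n) :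
    PowerSeries.coeff (R := Polynomial ℤ) (n + 1) (G ^ (k + 1))
      = ∑ j ∈ Finset.range (n - k + 1),
          Polynomial.X ^ (2 * j) *
            Polynomial.C ((n.choose j : ℤ) * (n.choose (j + k))
              - chooseZ n ((j : ℤ) - 1) * (n.choose (j + k + 1))) := by
  rw [main_coeff G h0 hG n k, ← rhs_eq n k hk]
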